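/- There exists a constant 𝒞* depending only on d, m and 𝒞 with the following property: if X = (X_n)_{n∈ℤ^d} is a strictly stationary, centered, m-dependent random field with E[X_0⁴] ≤ 𝒞, then for every J > 0, every B ⊆ ℤ^d and every N ∈ ℕ, E[S_N(B,X^J)⁴] ≤ 𝒞*·(card(B_N)/(2N+1)^d)², where X^J is the truncation of X at level J. -/

import Mathlib

open MeasureTheory ProbabilityTheory Filter
open scoped ENNReal NNReal

noncomputable section

/-- The discrete cube `[-N,N]^d ⊆ ℤ^d` as a finset. -/
def intCube (d N : ℕ) : Finset (Fin d → ℤ) :=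
  Fintype.piFinset fun _ => Finset.Icc (-(N : ℤ)) (N : ℤ)

open Classical in
/-- `A_N = A ∩ [-N,N]^d` as a finset. -/
def restr (d : ℕ) (A : Set (Fin d → ℤ)) (N : ℕ) : Finset (Fin d → ℤ) :=
  (intCube d N).filter fun n => n ∈ A

/-- The normalized partial sum `S_N(A,X) = (2N+1)^{-d/2} ∑_{n ∈ A_N} X_n`. -/
def SN {Ω : Type*} (d N : ℕ) (A : Set (Fin d → ℤ)) (X : (Fin d → ℤ) → Ω → ℝ)
    (ω : Ω) : ℝ :=
  (Real.sqrt ((2 * N + 1) ^ d))⁻¹ * ∑ n ∈ restr d A N, X n ω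

/-- `H_N(k;A) = card(A_N ∩ (k + A_N)) / (2N+1)^d`. -/
def HN (d : ℕ) (A : Set (Fin d → ℤ)) (N : ℕ) (k : Fin d → ℤ) : ℝ :=
  ((restr d A N ∩ (restr d A N).image (k + ·)).card : ℝ) / (2 * N + 1 : ℝ) ^ d

/-- The sup-norm `‖k‖ = max_i |k_i|` on `ℤ^d`, as a natural number. -/
def supNormZ {d : ℕ} (k : Fin d → ℤ) : ℕ :=
  Finset.univ.sup fun i => (k i).natAbs

/-- `dist(A,B) ≥ r` in the sup-norm. -/
def setDistGe {d : ℕ} (A B : Set (Fin d → ℤ)) (r : ℝ) : Prop :=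
  ∀ a ∈ A, ∀ b ∈ B, r ≤ (supNormZ (a - b) : ℝ)

/-- `A` is asymptotically measurable with limit function `Hlim`. -/
def IsAM (d : ℕ) (A : Set (Fin d → ℤ)) (Hlim : (Fin d → ℤ) → ℝ) : Prop :=
  ∀ k, Tendsto (fun N => HN d A N k) atTop (nhds (Hlim k)) ∧ 0 < Hlim k ∧ Hlim k < 1

/-- The truncation of the field `X` at level `J`:
`X^J_n = X_n·1_{|X_n|≤J} − E[X_n·1_{|X_n|≤J}]`. -/
def truncF {Ω : Type*} [MeasureSpace Ω] {d : ℕ} (X : (Fin d → ℤ) → Ω → ℝ) (J : ℝ)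
    (n : Fin d → ℤ) (ω : Ω) : ℝ :=
  (if |X n ω| ≤ J then X n ω else 0) - ∫ ω', if |X n ω'| ≤ J then X n ω' else 0

/-- The covariance function `r^X(k) = E[X_0 X_k]`. -/
def covF {Ω : Type*} [MeasureSpace Ω] {d : ℕ} (X : (Fin d → ℤ) → Ω → ℝ)
    (k : Fin d → ℤ) : ℝ :=
  ∫ ω, X 0 ω * X k ω

/-- Strict stationarity of a random field: for every `k` the shifted family has the
same joint distribution as the original one. -/
def StrictStat {Ω : Type*} [MeasureSpace Ω] {d : ℕ} (X : (Fin d → ℤ) → Ω → ℝ) : Prop :=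
  ∀ k : Fin d → ℤ,
    Measure.map (fun ω (n : Fin d → ℤ) => X (n + k) ω) (ℙ : Measure Ω)
      = Measure.map (fun ω (n : Fin d → ℤ) => X n ω) (ℙ : Measure Ω)

/-- `m`-dependence: families indexed by finite sets at sup-norm distance `> m`
are independent. -/
def MDep {Ω : Type*} [MeasureSpace Ω] {d : ℕ} (m : ℕ) (X : (Fin d → ℤ) → Ω → ℝ) : Prop :=
  ∀ S T : Finset (Fin d → ℤ),
    (∀ s ∈ S, ∀ t ∈ T, (m : ℝ) < (supNormZ (s - t) : ℝ)) →
      IndepFun (fun ω (s : S) => X s.1 ω) (fun ω (t : T) => X t.1 ω) ℙ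

/-- Convergence in distribution to a centered Gaussian with variance `v`. -/
def WeakToGaussian {Ω : Type*} [MeasureSpace Ω] (Y : ℕ → Ω → ℝ) (v : ℝ≥0) : Prop :=
  ∀ f : BoundedContinuousFunction ℝ ℝ,
    Tendsto (fun N => ∫ ω, f (Y N ω)) atTop (nhds (∫ x, f x ∂gaussianReal 0 v))

end

section AuxGeom

variable {d : ℕ}

lemma supNormZ_triangle (x y z : Fin d → ℤ) :
    supNormZ (x - z) ≤ supNormZ (x - y) + supNormZ (y - z) := by
  refine Finset.sup_le fun i _ => ?_
  have h1 : ((x - y) i).natAbs ≤ supNormZ (x - y) :=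
    Finset.le_sup (f := fun i => ((x - y) i).natAbs) (Finset.mem_univ i)
  have h2 : ((y - z) i).natAbs ≤ supNormZ (y - z) :=
    Finset.le_sup (f := fun i => ((y - z) i).natAbs) (Finset.mem_univ i)
  simp only [Pi.sub_apply] at h1 h2 ⊢
  omega

lemma supNormZ_comm (x y : Fin d → ℤ) : supNormZ (x - y) = supNormZ (y - x) := by
  unfold supNormZ
  congr 1
  funext i
  simp only [Pi.sub_apply]
  omega

lemma pair_bound (m : ℕ) (p q r s : Fin d → ℤ)
    (hpq : supNormZ (p - q) ≤ m)
    (hr : supNormZ (r - p) ≤ m ∨ supNormZ (r - q) ≤ m ∨ supNormZ (r - s) ≤ m)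
    (hs : supNormZ (s - p) ≤ m ∨ supNormZ (s - q) ≤ m ∨ supNormZ (s - r) ≤ m) :
    supNormZ (r - s) ≤ 3 * m := by
  have t1 := supNormZ_triangle r p s
  have t2 := supNormZ_triangle r q s
  have t3 := supNormZ_triangle p q s
  have t4 := supNormZ_triangle q p s
  have e1 := supNormZ_comm p s
  have e2 := supNormZ_comm q s
  have e3 := supNormZ_comm r s
  have e4 := supNormZ_comm q p
  rcases hr with h | h | h <;> rcases hs with h' | h' | h' <;> omega

lemma pairing (m : ℕ) (a b c d : Fin d → ℤ)
    (ha : supNormZ (a-b) ≤ m ∨ supNormZ (a-c) ≤ m ∨ supNormZ (a-d) ≤ m)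
    (hb : supNormZ (b-a) ≤ m ∨ supNormZ (b-c) ≤ m ∨ supNormZ (b-d) ≤ m)
    (hc : supNormZ (c-a) ≤ m ∨ supNormZ (c-b) ≤ m ∨ supNormZ (c-d) ≤ m)
    (hd : supNormZ (d-a) ≤ m ∨ supNormZ (d-b) ≤ m ∨ supNormZ (d-c) ≤ m) :
    (supNormZ (a-b) ≤ 3*m ∧ supNormZ (c-d) ≤ 3*m) ∨
    (supNormZ (a-c) ≤ 3*m ∧ supNormZ (b-d) ≤ 3*m) ∨
    (supNormZ (a-d) ≤ 3*m ∧ supNormZ (b-c) ≤ 3*m) := by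
  rcases ha with h | h | h
  · exact Or.inl ⟨le_trans h (by omega), pair_bound m a b c d h hc hd⟩
  · exact Or.inr (Or.inl ⟨le_trans h (by omega),
      pair_bound m a c b d h (by tauto) (by tauto)⟩)
  · exact Or.inr (Or.inr ⟨le_trans h (by omega),
      pair_bound m a d b c h (by tauto) (by tauto)⟩)

lemma card_intCube (d M : ℕ) : (intCube d M).card = (2*M+1)^d := by
  rw [intCube, Fintype.card_piFinset]
  have h : (Finset.Icc (-(M:ℤ)) (M:ℤ)).card = 2*M+1 := by
    rw [Int.card_Icc]; omega
  simp [h]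

lemma mem_intCube_iff {M : ℕ} (x : Fin d → ℤ) : x ∈ intCube d M ↔ supNormZ x ≤ M := by
  simp only [intCube, Fintype.mem_piFinset, Finset.mem_Icc, supNormZ, Finset.sup_le_iff,
    Finset.mem_univ, forall_true_left]
  constructor <;> intro h i <;> have := h i <;> omega

lemma row_card_le (F : Finset (Fin d → ℤ)) (M : ℕ) (a : Fin d → ℤ) :
    (F.filter (fun b => supNormZ (a - b) ≤ M)).card ≤ (2*M+1)^d := by
  classical
  have hsub : F.filter (fun b => supNormZ (a - b) ≤ M) ⊆ (intCube d M).image (fun v => a - v) := by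
    intro b hb
    simp only [Finset.mem_filter] at hb
    exact Finset.mem_image.2 ⟨a - b, (mem_intCube_iff _).2 hb.2, sub_sub_cancel a b⟩
  calc (F.filter (fun b => supNormZ (a - b) ≤ M)).card
      ≤ ((intCube d M).image (fun v => a - v)).card := Finset.card_le_card hsub
    _ ≤ (intCube d M).card := Finset.card_image_le
    _ = (2*M+1)^d := card_intCube d M

/-- indicator of `supNormZ (x - y) ≤ M` -/
def indM {d : ℕ} (M : ℕ) (x y : Fin d → ℤ) : ℝ :=
  if supNormZ (x - y) ≤ M then 1 else 0

lemma indM_nonneg {M : ℕ} (x y : Fin d → ℤ) : 0 ≤ indM M x y := by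
  unfold indM; split <;> norm_num

lemma indM_of_le {M : ℕ} {x y : Fin d → ℤ} (h : supNormZ (x - y) ≤ M) : indM M x y = 1 := by
  simp [indM, h]

lemma row_sum_le (F : Finset (Fin d → ℤ)) (M : ℕ) (a : Fin d → ℤ) :
    ∑ b ∈ F, indM M a b ≤ ((2*M+1)^d : ℕ) := by
  classical
  unfold indM
  rw [Finset.sum_boole]
  exact_mod_cast row_card_le F M a

end AuxGeom

section AuxProb

open MeasureTheory

variable {Ω : Type*} [MeasureSpace Ω] [IsProbabilityMeasure (ℙ : Measure Ω)]

lemma integrable_of_abs_le {f : Ω → ℝ} (hf : Measurable f) {C : ℝ} (h : ∀ ω, |f ω| ≤ C) :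
    Integrable f ℙ :=
  (integrable_const C).mono' hf.aestronglyMeasurable
    (Filter.Eventually.of_forall fun ω => by simpa [Real.norm_eq_abs] using h ω)

lemma sq_integral_le {f : Ω → ℝ} (hf : Measurable f) {C : ℝ} (hb : ∀ ω, |f ω| ≤ C) :
    (∫ ω, f ω) ^ 2 ≤ ∫ ω, f ω ^ 2 := by
  have hfi : Integrable f ℙ := integrable_of_abs_le hf hb
  have hf2 : Integrable (fun ω => f ω ^ 2) ℙ :=
    integrable_of_abs_le (hf.pow_const 2) (C := C ^ 2) fun ω => by
      rw [abs_pow]; exact pow_le_pow_left₀ (abs_nonneg _) (hb ω) 2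
  set c := ∫ ω, f ω with hc
  have key : 0 ≤ ∫ ω, (f ω - c) ^ 2 := integral_nonneg fun ω => sq_nonneg _
  have expand : ∫ ω, (f ω - c) ^ 2 = (∫ ω, f ω ^ 2) - c ^ 2 := by
    have hpt : ∀ ω, (f ω - c) ^ 2 = (f ω ^ 2 - (2 * c) * f ω) + c ^ 2 := fun ω => by ring
    simp only [hpt]
    have hmul : Integrable (fun ω => 2 * c * f ω) ℙ := hfi.const_mul (2 * c)
    have hsub : Integrable (fun ω => f ω ^ 2 - 2 * c * f ω) ℙ := hf2.sub hmul
    rw [integral_add hsub (integrable_const _),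
      integral_sub hf2 hmul, integral_const_mul, integral_const]
    simp [← hc]
    ring
  linarith

variable {d : ℕ} {X : (Fin d → ℤ) → Ω → ℝ} {J : ℝ}

lemma trunc_meas (n : Fin d → ℤ) (hX : Measurable (X n)) :
    Measurable (fun ω => if |X n ω| ≤ J then X n ω else 0) :=
  Measurable.ite (measurableSet_le hX.abs measurable_const) hX measurable_const

lemma trunc_abs_le (hJ : 0 < J) (n : Fin d → ℤ) (ω : Ω) :
    |if |X n ω| ≤ J then X n ω else 0| ≤ J := by
  split
  · assumption
  · simpa using hJ.le

lemma trunc_integrable (hJ : 0 < J) (n : Fin d → ℤ) (hX : Measurable (X n)) :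
    Integrable (fun ω => if |X n ω| ≤ J then X n ω else 0) ℙ :=
  integrable_of_abs_le (trunc_meas n hX) (trunc_abs_le hJ n)

lemma truncF_eq (n : Fin d → ℤ) : truncF X J n = fun ω =>
    (if |X n ω| ≤ J then X n ω else 0) - ∫ ω', if |X n ω'| ≤ J then X n ω' else 0 := rfl

lemma truncF_meas (n : Fin d → ℤ) (hX : Measurable (X n)) : Measurable (truncF X J n) :=
  (trunc_meas n hX).sub measurable_const

lemma trunc_mean_abs_le (hJ : 0 < J) (n : Fin d → ℤ) (hX : Measurable (X n)) :
    |∫ ω', if |X n ω'| ≤ J then X n ω' else 0| ≤ J := by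
  calc |∫ ω', if |X n ω'| ≤ J then X n ω' else 0|
      ≤ ∫ ω', |if |X n ω'| ≤ J then X n ω' else 0| := by
        simpa [Real.norm_eq_abs] using
          norm_integral_le_integral_norm (μ := (ℙ : Measure Ω))
            (fun ω' => if |X n ω'| ≤ J then X n ω' else 0)
    _ ≤ ∫ _ω', J := integral_mono (trunc_integrable hJ n hX).abs (integrable_const J)
        (trunc_abs_le hJ n)
    _ = J := by simp

lemma truncF_abs_le (hJ : 0 < J) (n : Fin d → ℤ) (hX : Measurable (X n)) (ω : Ω) :
    |truncF X J n ω| ≤ 2 * J := by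
  rw [truncF_eq]
  calc |(if |X n ω| ≤ J then X n ω else 0) - ∫ ω', if |X n ω'| ≤ J then X n ω' else 0|
      ≤ |if |X n ω| ≤ J then X n ω else 0| + |∫ ω', if |X n ω'| ≤ J then X n ω' else 0| :=
        abs_sub _ _
    _ ≤ J + J := add_le_add (trunc_abs_le hJ n ω) (trunc_mean_abs_le hJ n hX)
    _ = 2 * J := by ring

lemma truncF_integrable (hJ : 0 < J) (n : Fin d → ℤ) (hX : Measurable (X n)) :
    Integrable (truncF X J n) ℙ :=
  integrable_of_abs_le (truncF_meas n hX) (truncF_abs_le hJ n hX)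

lemma truncF_integral_zero (hJ : 0 < J) (n : Fin d → ℤ) (hX : Measurable (X n)) :
    ∫ ω, truncF X J n ω = 0 := by
  rw [truncF_eq]
  rw [integral_sub (trunc_integrable hJ n hX) (integrable_const _), integral_const]
  simp

lemma truncF_fourth_le (hJ : 0 < J) (n : Fin d → ℤ) (hX : Measurable (X n))
    (hX4 : Integrable (fun ω => X n ω ^ 4) ℙ) :
    ∫ ω, truncF X J n ω ^ 4 ≤ 16 * ∫ ω, X n ω ^ 4 := by
  set T : Ω → ℝ := fun ω => if |X n ω| ≤ J then X n ω else 0 with hT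
  have hTm : Measurable T := trunc_meas n hX
  have hTb : ∀ ω, |T ω| ≤ J := trunc_abs_le hJ n
  have hT4i : Integrable (fun ω => T ω ^ 4) ℙ :=
    integrable_of_abs_le (hTm.pow_const 4) (C := J ^ 4) fun ω => by
      rw [abs_pow]; exact pow_le_pow_left₀ (abs_nonneg _) (hTb ω) 4
  set c : ℝ := ∫ ω, T ω with hc
  have h1 : c ^ 2 ≤ ∫ ω, T ω ^ 2 := sq_integral_le hTm hTb
  have h2 : (∫ ω, T ω ^ 2) ^ 2 ≤ ∫ ω, (T ω ^ 2) ^ 2 :=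
    sq_integral_le (hTm.pow_const 2) (C := J ^ 2) fun ω => by
      rw [abs_pow]; exact pow_le_pow_left₀ (abs_nonneg _) (hTb ω) 2
  have h3 : ∫ ω, (T ω ^ 2) ^ 2 = ∫ ω, T ω ^ 4 := by
    congr 1; funext ω; ring
  have hc4 : c ^ 4 ≤ ∫ ω, T ω ^ 4 := by
    calc c ^ 4 = (c ^ 2) ^ 2 := by ring
      _ ≤ (∫ ω, T ω ^ 2) ^ 2 := pow_le_pow_left₀ (sq_nonneg _) h1 2
      _ ≤ ∫ ω, (T ω ^ 2) ^ 2 := h2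
      _ = ∫ ω, T ω ^ 4 := h3
  have hpt : ∀ ω, truncF X J n ω ^ 4 ≤ 8 * T ω ^ 4 + 8 * c ^ 4 := by
    intro ω
    have he : truncF X J n ω = T ω - c := rfl
    rw [he]
    have g1 : (T ω - c) ^ 2 ≤ 2 * T ω ^ 2 + 2 * c ^ 2 := by nlinarith [sq_nonneg (T ω + c)]
    have g2 : ((T ω - c) ^ 2) ^ 2 ≤ (2 * T ω ^ 2 + 2 * c ^ 2) ^ 2 :=
      pow_le_pow_left₀ (sq_nonneg _) g1 2
    nlinarith [sq_nonneg (T ω ^ 2 - c ^ 2)]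
  have hint : ∫ ω, truncF X J n ω ^ 4 ≤ ∫ ω, (8 * T ω ^ 4 + 8 * c ^ 4) := by
    refine integral_mono ?_ ((hT4i.const_mul 8).add (integrable_const _)) hpt
    exact integrable_of_abs_le ((truncF_meas n hX).pow_const 4) (C := (2 * J) ^ 4)
      fun ω => by rw [abs_pow]; exact pow_le_pow_left₀ (abs_nonneg _) (truncF_abs_le hJ n hX ω) 4
  have heval : ∫ ω, (8 * T ω ^ 4 + 8 * c ^ 4) = 8 * (∫ ω, T ω ^ 4) + 8 * c ^ 4 := by
    rw [integral_add (hT4i.const_mul 8) (integrable_const _), integral_const_mul, integral_const]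
    simp
  have hTX : ∫ ω, T ω ^ 4 ≤ ∫ ω, X n ω ^ 4 := by
    refine integral_mono hT4i hX4 fun ω => ?_
    by_cases h : |X n ω| ≤ J
    · simp [hT, h]
    · have hT0 : T ω = 0 := by simp [hT, h]
      rw [hT0]
      simpa using (by positivity : (0:ℝ) ≤ X n ω ^ 4)
  linarith

lemma integrable_pow4 {f : Ω → ℝ} (hf : MemLp f 4 ℙ) : Integrable (fun ω => f ω ^ 4) ℙ := by
  have h := hf.integrable_norm_rpow (by norm_num) (by norm_num)
  refine h.congr (Filter.Eventually.of_forall fun ω => ?_)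
  have h4 : ((4 : ℝ≥0∞)).toReal = ((4 : ℕ) : ℝ) := by norm_num
  show ‖f ω‖ ^ ((4 : ℝ≥0∞)).toReal = f ω ^ 4
  rw [h4, Real.norm_eq_abs, Real.rpow_natCast, ← abs_pow, abs_of_nonneg (by positivity)]

lemma pow4_integral_shift (hXm : ∀ n, Measurable (X n)) (hSS : StrictStat X)
    (n : Fin d → ℤ) : ∫ ω, X n ω ^ 4 = ∫ ω, X 0 ω ^ 4 := by
  have heval : Measurable fun g : (Fin d → ℤ) → ℝ => g 0 := measurable_pi_apply 0
  have hfam1 : Measurable fun ω (j : Fin d → ℤ) => X (j + n) ω :=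
    measurable_pi_lambda _ fun j => hXm _
  have hfam0 : Measurable fun ω (j : Fin d → ℤ) => X j ω :=
    measurable_pi_lambda _ fun j => hXm _
  have hmap : Measure.map (X n) (ℙ : Measure Ω) = Measure.map (X 0) (ℙ : Measure Ω) := by
    have h := hSS n
    calc Measure.map (X n) (ℙ : Measure Ω)
        = Measure.map ((fun g : (Fin d → ℤ) → ℝ => g 0) ∘ fun ω j => X (j + n) ω) ℙ := by
          congr 1
          funext ω
          simp [Function.comp]
      _ = Measure.map (fun g : (Fin d → ℤ) → ℝ => g 0)
            (Measure.map (fun ω (j : Fin d → ℤ) => X (j + n) ω) ℙ) :=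
          (Measure.map_map heval hfam1).symm
      _ = Measure.map (fun g : (Fin d → ℤ) → ℝ => g 0)
            (Measure.map (fun ω (j : Fin d → ℤ) => X j ω) ℙ) := by rw [h]
      _ = Measure.map ((fun g : (Fin d → ℤ) → ℝ => g 0) ∘ fun ω (j : Fin d → ℤ) => X j ω) ℙ :=
          Measure.map_map heval hfam0
      _ = Measure.map (X 0) ℙ := rfl
  have hg : ∀ μ : Measure ℝ, AEStronglyMeasurable (fun x : ℝ => x ^ 4) μ := fun μ =>
    (continuous_pow 4).aestronglyMeasurable
  calc ∫ ω, X n ω ^ 4 = ∫ x, x ^ 4 ∂(Measure.map (X n) ℙ) :=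
      (integral_map (hXm n).aemeasurable (hg _)).symm
    _ = ∫ x, x ^ 4 ∂(Measure.map (X 0) ℙ) := by rw [hmap]
    _ = ∫ ω, X 0 ω ^ 4 := integral_map (hXm 0).aemeasurable (hg _)

lemma vanish_isolated {mdep : ℕ} (hXm : ∀ n, Measurable (X n))
    (hdep : MDep mdep X) (hJ : 0 < J) (p q r s : Fin d → ℤ)
    (h1 : mdep < supNormZ (p - q)) (h2 : mdep < supNormZ (p - r))
    (h3 : mdep < supNormZ (p - s)) :
    ∫ ω, truncF X J p ω * (truncF X J q ω * truncF X J r ω * truncF X J s ω) = 0 := by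
  classical
  set S : Finset (Fin d → ℤ) := {p} with hS
  set T : Finset (Fin d → ℤ) := {q, r, s} with hTs
  have hST : ∀ x ∈ S, ∀ y ∈ T, (mdep : ℝ) < (supNormZ (x - y) : ℝ) := by
    intro x hx y hy
    simp only [hS, Finset.mem_singleton] at hx
    simp only [hTs, Finset.mem_insert, Finset.mem_singleton] at hy
    subst hx
    rcases hy with rfl | rfl | rfl
    · exact_mod_cast h1
    · exact_mod_cast h2
    · exact_mod_cast h3
  have hind := hdep S T hST
  have hpS : p ∈ S := by simp [hS]
  have hqT : q ∈ T := by simp [hTs]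
  have hrT : r ∈ T := by simp [hTs]
  have hsT : s ∈ T := by simp [hTs]
  have htr : Measurable fun x : ℝ => if |x| ≤ J then x else 0 :=
    Measurable.ite (measurableSet_le continuous_abs.measurable measurable_const)
      measurable_id measurable_const
  set φ : (S → ℝ) → ℝ := fun g =>
    (if |g ⟨p, hpS⟩| ≤ J then g ⟨p, hpS⟩ else 0) -
      ∫ ω', if |X p ω'| ≤ J then X p ω' else 0 with hφ
  set ψ : (T → ℝ) → ℝ := fun g =>
    ((if |g ⟨q, hqT⟩| ≤ J then g ⟨q, hqT⟩ else 0) -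
      ∫ ω', if |X q ω'| ≤ J then X q ω' else 0) *
    ((if |g ⟨r, hrT⟩| ≤ J then g ⟨r, hrT⟩ else 0) -
      ∫ ω', if |X r ω'| ≤ J then X r ω' else 0) *
    ((if |g ⟨s, hsT⟩| ≤ J then g ⟨s, hsT⟩ else 0) -
      ∫ ω', if |X s ω'| ≤ J then X s ω' else 0) with hψ
  have hφm : Measurable φ := (htr.comp (measurable_pi_apply _)).sub measurable_const
  have hψm : Measurable ψ :=
    (((htr.comp (measurable_pi_apply _)).sub measurable_const).mul
      ((htr.comp (measurable_pi_apply _)).sub measurable_const)).mul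
      ((htr.comp (measurable_pi_apply _)).sub measurable_const)
  have hcomp := hind.comp hφm hψm
  have e1 : (φ ∘ fun ω (x : S) => X x.1 ω) = truncF X J p := rfl
  have e2 : (ψ ∘ fun ω (y : T) => X y.1 ω) =
      fun ω => truncF X J q ω * truncF X J r ω * truncF X J s ω := rfl
  rw [e1, e2] at hcomp
  have hi1 : Integrable (truncF X J p) ℙ := truncF_integrable hJ p (hXm p)
  have hib : ∀ n ω, |truncF X J n ω| ≤ 2 * J := fun n => truncF_abs_le hJ n (hXm n)
  have hi2 : Integrable (fun ω => truncF X J q ω * truncF X J r ω * truncF X J s ω) ℙ := by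
    refine integrable_of_abs_le
      (((truncF_meas q (hXm q)).mul (truncF_meas r (hXm r))).mul (truncF_meas s (hXm s)))
      (C := (2 * J) * (2 * J) * (2 * J)) fun ω => ?_
    have h2J : (0:ℝ) ≤ 2 * J := by linarith
    rw [abs_mul, abs_mul]
    exact mul_le_mul (mul_le_mul (hib q ω) (hib r ω) (abs_nonneg _) h2J) (hib s ω)
      (abs_nonneg _) (by positivity)
  have hmul := hcomp.integral_mul_eq_mul_integral hi1.aestronglyMeasurable hi2.aestronglyMeasurable
  have hfin : ∫ ω, truncF X J p ω * (truncF X J q ω * truncF X J r ω * truncF X J s ω)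
      = (∫ ω, truncF X J p ω) *
        ∫ ω, truncF X J q ω * truncF X J r ω * truncF X J s ω := by
    simpa [Pi.mul_apply] using hmul
  rw [hfin, truncF_integral_zero hJ p (hXm p), zero_mul]

end AuxProb

/-- **Uniform fourth-moment bound for truncations of `m`-dependent fields:**
there is a constant `𝒞*` depending only on `d`, `m` and `𝒞` bounding
`E[S_N(B,X^J)⁴]` for all truncation levels `J`, sets `B` and `N`. -/
theorem truncated_fourth_moment_constant (d m : ℕ) (𝒞 : ℝ) :
    ∃ Cstar : ℝ, ∀ (Ω : Type) [MeasureSpace Ω],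
      IsProbabilityMeasure (ℙ : Measure Ω) →
      ∀ X : (Fin d → ℤ) → Ω → ℝ, (∀ n, Measurable (X n)) →
        StrictStat X → (∀ n, ∫ ω, X n ω = 0) → MDep m X →
        (∀ n, MemLp (X n) 4 ℙ) → (∫ ω, (X 0 ω) ^ 4) ≤ 𝒞 →
        ∀ J : ℝ, 0 < J → ∀ (B : Set (Fin d → ℤ)) (N : ℕ),
          ∫ ω, (SN d N B (truncF X J) ω) ^ 4
            ≤ Cstar * ((restr d B N).card / (2 * N + 1 : ℝ) ^ d) ^ 2 := by
  classical
  set β : ℝ := (((2*(3*m)+1)^d : ℕ) : ℝ) with hβ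
  have hβ0 : (0:ℝ) ≤ β := by positivity
  refine ⟨48 * max 𝒞 0 * β ^ 2, ?_⟩
  intro Ω _ hprob X hXm hSS _hcent hdep hL4 hmom J hJ B N
  haveI := hprob
  set K : ℝ := 16 * max 𝒞 0 with hK
  have hK0 : (0:ℝ) ≤ K := by
    rw [hK]; exact mul_nonneg (by norm_num) (le_max_right _ _)
  set Y : (Fin d → ℤ) → Ω → ℝ := truncF X J with hYdef
  set F : Finset (Fin d → ℤ) := restr d B N with hF
  have hYm : ∀ n, Measurable (Y n) := fun n => truncF_meas n (hXm n)
  have hYb : ∀ n ω, |Y n ω| ≤ 2 * J := fun n => truncF_abs_le hJ n (hXm n)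
  have hY4 : ∀ n, ∫ ω, Y n ω ^ 4 ≤ K := by
    intro n
    calc ∫ ω, Y n ω ^ 4 ≤ 16 * ∫ ω, X n ω ^ 4 :=
        truncF_fourth_le hJ n (hXm n) (integrable_pow4 (hL4 n))
      _ = 16 * ∫ ω, X 0 ω ^ 4 := by rw [pow4_integral_shift hXm hSS n]
      _ ≤ 16 * max 𝒞 0 := by
          have h1 : (∫ ω, X 0 ω ^ 4) ≤ max 𝒞 0 := le_trans hmom (le_max_left _ _)
          linarith
  have hprod_int : ∀ a b c e : Fin d → ℤ,
      Integrable (fun ω => Y a ω * Y b ω * (Y c ω * Y e ω)) ℙ := by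
    intro a b c e
    refine integrable_of_abs_le (((hYm a).mul (hYm b)).mul ((hYm c).mul (hYm e)))
      (C := (2*J) * (2*J) * ((2*J) * (2*J))) fun ω => ?_
    have h2J : (0:ℝ) ≤ 2 * J := by linarith
    rw [abs_mul, abs_mul, abs_mul]
    exact mul_le_mul (mul_le_mul (hYb a ω) (hYb b ω) (abs_nonneg _) h2J)
      (mul_le_mul (hYb c ω) (hYb e ω) (abs_nonneg _) h2J)
      (mul_nonneg (abs_nonneg _) (abs_nonneg _)) (by positivity)
  have hY4i : ∀ n, Integrable (fun ω => Y n ω ^ 4) ℙ := fun n =>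
    integrable_of_abs_le ((hYm n).pow_const 4) (C := (2*J)^4) fun ω => by
      rw [abs_pow]; exact pow_le_pow_left₀ (abs_nonneg _) (hYb n ω) 4
  have hterm_le : ∀ a b c e : Fin d → ℤ, (∫ ω, Y a ω * Y b ω * (Y c ω * Y e ω)) ≤ K := by
    intro a b c e
    have hpt : ∀ ω, Y a ω * Y b ω * (Y c ω * Y e ω) ≤
        (Y a ω ^ 4 + Y b ω ^ 4 + Y c ω ^ 4 + Y e ω ^ 4) / 4 := by
      intro ω
      nlinarith [sq_nonneg (Y a ω * Y b ω - Y c ω * Y e ω),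
        sq_nonneg (Y a ω ^ 2 - Y b ω ^ 2), sq_nonneg (Y c ω ^ 2 - Y e ω ^ 2)]
    have i_ab : Integrable (fun ω => Y a ω ^ 4 + Y b ω ^ 4) ℙ := (hY4i a).add (hY4i b)
    have i_abc : Integrable (fun ω => Y a ω ^ 4 + Y b ω ^ 4 + Y c ω ^ 4) ℙ := i_ab.add (hY4i c)
    have i_abce : Integrable (fun ω => Y a ω ^ 4 + Y b ω ^ 4 + Y c ω ^ 4 + Y e ω ^ 4) ℙ :=
      i_abc.add (hY4i e)
    have hri : Integrable (fun ω => (Y a ω ^ 4 + Y b ω ^ 4 + Y c ω ^ 4 + Y e ω ^ 4) / 4) ℙ :=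
      i_abce.div_const 4
    calc (∫ ω, Y a ω * Y b ω * (Y c ω * Y e ω))
        ≤ ∫ ω, (Y a ω ^ 4 + Y b ω ^ 4 + Y c ω ^ 4 + Y e ω ^ 4) / 4 :=
          integral_mono (hprod_int a b c e) hri hpt
      _ = ((∫ ω, Y a ω ^ 4) + (∫ ω, Y b ω ^ 4) + (∫ ω, Y c ω ^ 4) + (∫ ω, Y e ω ^ 4)) / 4 := by
          rw [integral_div, integral_add i_abc (hY4i e), integral_add i_ab (hY4i c),
            integral_add (hY4i a) (hY4i b)]
      _ ≤ (K + K + K + K) / 4 := by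
          have h1 := hY4 a; have h2 := hY4 b; have h3 := hY4 c; have h4 := hY4 e; linarith
      _ = K := by ring
  have hvan : ∀ p q r s : Fin d → ℤ, m < supNormZ (p - q) → m < supNormZ (p - r) →
      m < supNormZ (p - s) → ∫ ω, Y p ω * (Y q ω * Y r ω * Y s ω) = 0 :=
    fun p q r s h1 h2 h3 => vanish_isolated hXm hdep hJ p q r s h1 h2 h3
  -- per-tuple bound
  have htb : ∀ a b c e : Fin d → ℤ,
      (∫ ω, Y a ω * Y b ω * (Y c ω * Y e ω)) ≤
        K * (indM (3*m) a b * indM (3*m) c e) + K * (indM (3*m) a c * indM (3*m) b e)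
          + K * (indM (3*m) a e * indM (3*m) b c) := by
    intro a b c e
    have hRHS0 : ∀ x y u v : Fin d → ℤ, 0 ≤ K * (indM (3*m) x y * indM (3*m) u v) :=
      fun x y u v => mul_nonneg hK0 (mul_nonneg (indM_nonneg _ _) (indM_nonneg _ _))
    by_cases hga : supNormZ (a-b) ≤ m ∨ supNormZ (a-c) ≤ m ∨ supNormZ (a-e) ≤ m
    case neg =>
      push_neg at hga
      have h0 : (∫ ω, Y a ω * Y b ω * (Y c ω * Y e ω)) = 0 := by
        rw [show (fun ω => Y a ω * Y b ω * (Y c ω * Y e ω)) =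
          (fun ω => Y a ω * (Y b ω * Y c ω * Y e ω)) from funext fun ω => by ring]
        exact hvan a b c e hga.1 hga.2.1 hga.2.2
      rw [h0]
      exact add_nonneg (add_nonneg (hRHS0 _ _ _ _) (hRHS0 _ _ _ _)) (hRHS0 _ _ _ _)
    case pos =>
    by_cases hgb : supNormZ (b-a) ≤ m ∨ supNormZ (b-c) ≤ m ∨ supNormZ (b-e) ≤ m
    case neg =>
      push_neg at hgb
      have h0 : (∫ ω, Y a ω * Y b ω * (Y c ω * Y e ω)) = 0 := by
        rw [show (fun ω => Y a ω * Y b ω * (Y c ω * Y e ω)) =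
          (fun ω => Y b ω * (Y a ω * Y c ω * Y e ω)) from funext fun ω => by ring]
        exact hvan b a c e hgb.1 hgb.2.1 hgb.2.2
      rw [h0]
      exact add_nonneg (add_nonneg (hRHS0 _ _ _ _) (hRHS0 _ _ _ _)) (hRHS0 _ _ _ _)
    case pos =>
    by_cases hgc : supNormZ (c-a) ≤ m ∨ supNormZ (c-b) ≤ m ∨ supNormZ (c-e) ≤ m
    case neg =>
      push_neg at hgc
      have h0 : (∫ ω, Y a ω * Y b ω * (Y c ω * Y e ω)) = 0 := by
        rw [show (fun ω => Y a ω * Y b ω * (Y c ω * Y e ω)) =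
          (fun ω => Y c ω * (Y a ω * Y b ω * Y e ω)) from funext fun ω => by ring]
        exact hvan c a b e hgc.1 hgc.2.1 hgc.2.2
      rw [h0]
      exact add_nonneg (add_nonneg (hRHS0 _ _ _ _) (hRHS0 _ _ _ _)) (hRHS0 _ _ _ _)
    case pos =>
    by_cases hge : supNormZ (e-a) ≤ m ∨ supNormZ (e-b) ≤ m ∨ supNormZ (e-c) ≤ m
    case neg =>
      push_neg at hge
      have h0 : (∫ ω, Y a ω * Y b ω * (Y c ω * Y e ω)) = 0 := by
        rw [show (fun ω => Y a ω * Y b ω * (Y c ω * Y e ω)) =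
          (fun ω => Y e ω * (Y a ω * Y b ω * Y c ω)) from funext fun ω => by ring]
        exact hvan e a b c hge.1 hge.2.1 hge.2.2
      rw [h0]
      exact add_nonneg (add_nonneg (hRHS0 _ _ _ _) (hRHS0 _ _ _ _)) (hRHS0 _ _ _ _)
    case pos =>
    rcases pairing m a b c e hga hgb hgc hge with ⟨u1, u2⟩ | ⟨u1, u2⟩ | ⟨u1, u2⟩
    · have hr2 := hRHS0 a c b e; have hr3 := hRHS0 a e b c
      calc (∫ ω, Y a ω * Y b ω * (Y c ω * Y e ω)) ≤ K := hterm_le a b c e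
        _ ≤ _ := by rw [indM_of_le u1, indM_of_le u2]; nlinarith
    · have hr2 := hRHS0 a b c e; have hr3 := hRHS0 a e b c
      calc (∫ ω, Y a ω * Y b ω * (Y c ω * Y e ω)) ≤ K := hterm_le a b c e
        _ ≤ _ := by rw [indM_of_le u1, indM_of_le u2]; nlinarith
    · have hr2 := hRHS0 a b c e; have hr3 := hRHS0 a c b e
      calc (∫ ω, Y a ω * Y b ω * (Y c ω * Y e ω)) ≤ K := hterm_le a b c e
        _ ≤ _ := by rw [indM_of_le u1, indM_of_le u2]; nlinarith
  -- the expansion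
  have hexp : ∀ ω, (∑ n ∈ F, Y n ω) ^ 4
      = ∑ a ∈ F, ∑ b ∈ F, ∑ c ∈ F, ∑ e ∈ F, Y a ω * Y b ω * (Y c ω * Y e ω) := by
    intro ω
    calc (∑ n ∈ F, Y n ω) ^ 4
        = ((∑ n ∈ F, Y n ω) * ∑ n ∈ F, Y n ω) * ((∑ n ∈ F, Y n ω) * ∑ n ∈ F, Y n ω) := by
          ring
      _ = (∑ a ∈ F, ∑ b ∈ F, Y a ω * Y b ω) * (∑ c ∈ F, ∑ e ∈ F, Y c ω * Y e ω) := by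
          rw [Finset.sum_mul_sum F F (fun a => Y a ω) (fun b => Y b ω)]
      _ = ∑ a ∈ F, ∑ c ∈ F, (∑ b ∈ F, Y a ω * Y b ω) * ∑ e ∈ F, Y c ω * Y e ω :=
          Finset.sum_mul_sum F F _ _
      _ = ∑ a ∈ F, ∑ c ∈ F, ∑ b ∈ F, ∑ e ∈ F, Y a ω * Y b ω * (Y c ω * Y e ω) := by
          refine Finset.sum_congr rfl fun a _ => Finset.sum_congr rfl fun c _ => ?_
          rw [Finset.sum_mul_sum F F _ _]
      _ = ∑ a ∈ F, ∑ b ∈ F, ∑ c ∈ F, ∑ e ∈ F, Y a ω * Y b ω * (Y c ω * Y e ω) := by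
          refine Finset.sum_congr rfl fun a _ => ?_
          exact Finset.sum_comm
  have hsum_int : ∫ ω, ∑ a ∈ F, ∑ b ∈ F, ∑ c ∈ F, ∑ e ∈ F, Y a ω * Y b ω * (Y c ω * Y e ω)
      = ∑ a ∈ F, ∑ b ∈ F, ∑ c ∈ F, ∑ e ∈ F, ∫ ω, Y a ω * Y b ω * (Y c ω * Y e ω) := by
    rw [integral_finset_sum F (fun a _ => integrable_finset_sum F fun b _ =>
      integrable_finset_sum F fun c _ => integrable_finset_sum F fun e _ => hprod_int a b c e)]
    refine Finset.sum_congr rfl fun a _ => ?_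
    rw [integral_finset_sum F (fun b _ => integrable_finset_sum F fun c _ =>
      integrable_finset_sum F fun e _ => hprod_int a b c e)]
    refine Finset.sum_congr rfl fun b _ => ?_
    rw [integral_finset_sum F (fun c _ => integrable_finset_sum F fun e _ => hprod_int a b c e)]
    refine Finset.sum_congr rfl fun c _ => ?_
    exact integral_finset_sum F fun e _ => hprod_int a b c e
  -- counting
  set W : ℝ := ∑ x ∈ F, ∑ y ∈ F, indM (3*m) x y with hW
  have hrow : ∀ a : Fin d → ℤ, ∑ b ∈ F, indM (3*m) a b ≤ β := fun a => by
    rw [hβ]; exact row_sum_le F (3*m) a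
  have hrow0 : ∀ a : Fin d → ℤ, 0 ≤ ∑ b ∈ F, indM (3*m) a b :=
    fun a => Finset.sum_nonneg fun b _ => indM_nonneg _ _
  have hW_le : W ≤ F.card * β := by
    rw [hW]
    calc ∑ x ∈ F, ∑ y ∈ F, indM (3*m) x y ≤ ∑ _x ∈ F, β := Finset.sum_le_sum fun x _ => hrow x
      _ = F.card * β := by rw [Finset.sum_const, nsmul_eq_mul]
  have hW0 : 0 ≤ W := by
    rw [hW]; exact Finset.sum_nonneg fun x _ => hrow0 x
  have hQ1 : ∑ a ∈ F, ∑ b ∈ F, ∑ c ∈ F, ∑ e ∈ F, indM (3*m) a b * indM (3*m) c e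
      = W * W := by
    calc ∑ a ∈ F, ∑ b ∈ F, ∑ c ∈ F, ∑ e ∈ F, indM (3*m) a b * indM (3*m) c e
        = ∑ a ∈ F, ∑ b ∈ F, indM (3*m) a b * W := by
          refine Finset.sum_congr rfl fun a _ => Finset.sum_congr rfl fun b _ => ?_
          rw [hW, Finset.mul_sum]
          exact Finset.sum_congr rfl fun c _ => (Finset.mul_sum _ _ _).symm
      _ = ∑ a ∈ F, (∑ b ∈ F, indM (3*m) a b) * W :=
          Finset.sum_congr rfl fun a _ => (Finset.sum_mul _ _ _).symm
      _ = (∑ a ∈ F, ∑ b ∈ F, indM (3*m) a b) * W := (Finset.sum_mul _ _ _).symm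
      _ = W * W := by rw [← hW]
  have hQ2 : ∑ a ∈ F, ∑ b ∈ F, ∑ c ∈ F, ∑ e ∈ F, indM (3*m) a c * indM (3*m) b e
      = W * W := by
    calc ∑ a ∈ F, ∑ b ∈ F, ∑ c ∈ F, ∑ e ∈ F, indM (3*m) a c * indM (3*m) b e
        = ∑ a ∈ F, ∑ b ∈ F, (∑ c ∈ F, indM (3*m) a c) * ∑ e ∈ F, indM (3*m) b e := by
          refine Finset.sum_congr rfl fun a _ => Finset.sum_congr rfl fun b _ => ?_
          exact (Finset.sum_mul_sum F F _ _).symm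
      _ = ∑ a ∈ F, (∑ c ∈ F, indM (3*m) a c) * ∑ b ∈ F, ∑ e ∈ F, indM (3*m) b e := by
          refine Finset.sum_congr rfl fun a _ => ?_
          exact (Finset.mul_sum _ _ _).symm
      _ = (∑ a ∈ F, ∑ c ∈ F, indM (3*m) a c) * ∑ b ∈ F, ∑ e ∈ F, indM (3*m) b e :=
          (Finset.sum_mul _ _ _).symm
      _ = W * W := by rw [← hW]
  have hQ3 : ∑ a ∈ F, ∑ b ∈ F, ∑ c ∈ F, ∑ e ∈ F, indM (3*m) a e * indM (3*m) b c
      = W * W := by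
    calc ∑ a ∈ F, ∑ b ∈ F, ∑ c ∈ F, ∑ e ∈ F, indM (3*m) a e * indM (3*m) b c
        = ∑ a ∈ F, ∑ b ∈ F, (∑ c ∈ F, indM (3*m) b c) * ∑ e ∈ F, indM (3*m) a e := by
          refine Finset.sum_congr rfl fun a _ => Finset.sum_congr rfl fun b _ => ?_
          rw [Finset.sum_mul_sum F F (fun c => indM (3*m) b c) (fun e => indM (3*m) a e)]
          exact Finset.sum_congr rfl fun c _ => Finset.sum_congr rfl fun e _ => mul_comm _ _
      _ = ∑ a ∈ F, (∑ e ∈ F, indM (3*m) a e) * ∑ b ∈ F, ∑ c ∈ F, indM (3*m) b c := by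
          refine Finset.sum_congr rfl fun a _ => ?_
          rw [Finset.mul_sum]
          exact Finset.sum_congr rfl fun b _ => mul_comm _ _
      _ = (∑ a ∈ F, ∑ e ∈ F, indM (3*m) a e) * ∑ b ∈ F, ∑ c ∈ F, indM (3*m) b c :=
          (Finset.sum_mul _ _ _).symm
      _ = W * W := by rw [← hW]
  have hpull1 : ∑ a ∈ F, ∑ b ∈ F, ∑ c ∈ F, ∑ e ∈ F, K * (indM (3*m) a b * indM (3*m) c e)
      = K * ∑ a ∈ F, ∑ b ∈ F, ∑ c ∈ F, ∑ e ∈ F, indM (3*m) a b * indM (3*m) c e := by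
    rw [Finset.mul_sum]
    refine Finset.sum_congr rfl fun a _ => ?_
    rw [Finset.mul_sum]
    refine Finset.sum_congr rfl fun b _ => ?_
    rw [Finset.mul_sum]
    refine Finset.sum_congr rfl fun c _ => ?_
    rw [Finset.mul_sum]
  have hpull2 : ∑ a ∈ F, ∑ b ∈ F, ∑ c ∈ F, ∑ e ∈ F, K * (indM (3*m) a c * indM (3*m) b e)
      = K * ∑ a ∈ F, ∑ b ∈ F, ∑ c ∈ F, ∑ e ∈ F, indM (3*m) a c * indM (3*m) b e := by
    rw [Finset.mul_sum]
    refine Finset.sum_congr rfl fun a _ => ?_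
    rw [Finset.mul_sum]
    refine Finset.sum_congr rfl fun b _ => ?_
    rw [Finset.mul_sum]
    refine Finset.sum_congr rfl fun c _ => ?_
    rw [Finset.mul_sum]
  have hpull3 : ∑ a ∈ F, ∑ b ∈ F, ∑ c ∈ F, ∑ e ∈ F, K * (indM (3*m) a e * indM (3*m) b c)
      = K * ∑ a ∈ F, ∑ b ∈ F, ∑ c ∈ F, ∑ e ∈ F, indM (3*m) a e * indM (3*m) b c := by
    rw [Finset.mul_sum]
    refine Finset.sum_congr rfl fun a _ => ?_
    rw [Finset.mul_sum]
    refine Finset.sum_congr rfl fun b _ => ?_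
    rw [Finset.mul_sum]
    refine Finset.sum_congr rfl fun c _ => ?_
    rw [Finset.mul_sum]
  have hsum_le : (∑ a ∈ F, ∑ b ∈ F, ∑ c ∈ F, ∑ e ∈ F, ∫ ω, Y a ω * Y b ω * (Y c ω * Y e ω))
      ≤ K * (W * W) + K * (W * W) + K * (W * W) := by
    calc (∑ a ∈ F, ∑ b ∈ F, ∑ c ∈ F, ∑ e ∈ F, ∫ ω, Y a ω * Y b ω * (Y c ω * Y e ω))
        ≤ ∑ a ∈ F, ∑ b ∈ F, ∑ c ∈ F, ∑ e ∈ F,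
            (K * (indM (3*m) a b * indM (3*m) c e) + K * (indM (3*m) a c * indM (3*m) b e)
              + K * (indM (3*m) a e * indM (3*m) b c)) :=
          Finset.sum_le_sum fun a _ => Finset.sum_le_sum fun b _ => Finset.sum_le_sum fun c _ =>
            Finset.sum_le_sum fun e _ => htb a b c e
      _ = (∑ a ∈ F, ∑ b ∈ F, ∑ c ∈ F, ∑ e ∈ F, K * (indM (3*m) a b * indM (3*m) c e))
            + (∑ a ∈ F, ∑ b ∈ F, ∑ c ∈ F, ∑ e ∈ F, K * (indM (3*m) a c * indM (3*m) b e))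
            + (∑ a ∈ F, ∑ b ∈ F, ∑ c ∈ F, ∑ e ∈ F, K * (indM (3*m) a e * indM (3*m) b c)) := by
          simp only [Finset.sum_add_distrib]
      _ = K * (W * W) + K * (W * W) + K * (W * W) := by
          rw [hpull1, hpull2, hpull3, hQ1, hQ2, hQ3]
  -- assembly
  have hR0 : (0:ℝ) < (2 * (N:ℝ) + 1) ^ d := by positivity
  have key : ∫ ω, SN d N B Y ω ^ 4
      = (((2 * (N:ℝ) + 1) ^ d) ^ 2)⁻¹ *
        ∑ a ∈ F, ∑ b ∈ F, ∑ c ∈ F, ∑ e ∈ F, ∫ ω, Y a ω * Y b ω * (Y c ω * Y e ω) := by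
    have hc4 : ((Real.sqrt ((2 * (N:ℝ) + 1) ^ d))⁻¹) ^ 4 = (((2 * (N:ℝ) + 1) ^ d) ^ 2)⁻¹ := by
      rw [inv_pow]
      congr 1
      rw [show (4:ℕ) = 2*2 from rfl, pow_mul, Real.sq_sqrt hR0.le]
    have hpt : ∀ ω, SN d N B Y ω ^ 4 = (((2 * (N:ℝ) + 1) ^ d) ^ 2)⁻¹ *
        ∑ a ∈ F, ∑ b ∈ F, ∑ c ∈ F, ∑ e ∈ F, Y a ω * Y b ω * (Y c ω * Y e ω) := by
      intro ω
      rw [← hexp ω]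
      have h1 : SN d N B Y ω = (Real.sqrt ((2 * (N:ℝ) + 1) ^ d))⁻¹ * ∑ n ∈ F, Y n ω := rfl
      rw [h1, mul_pow, hc4]
    calc ∫ ω, SN d N B Y ω ^ 4
        = ∫ ω, (((2 * (N:ℝ) + 1) ^ d) ^ 2)⁻¹ *
            ∑ a ∈ F, ∑ b ∈ F, ∑ c ∈ F, ∑ e ∈ F, Y a ω * Y b ω * (Y c ω * Y e ω) := by
          simp only [hpt]
      _ = _ := by rw [integral_const_mul, hsum_int]
  rw [key]
  calc (((2 * (N:ℝ) + 1) ^ d) ^ 2)⁻¹ *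
        ∑ a ∈ F, ∑ b ∈ F, ∑ c ∈ F, ∑ e ∈ F, ∫ ω, Y a ω * Y b ω * (Y c ω * Y e ω)
      ≤ (((2 * (N:ℝ) + 1) ^ d) ^ 2)⁻¹ * (K * (W * W) + K * (W * W) + K * (W * W)) :=
        mul_le_mul_of_nonneg_left hsum_le (by positivity)
    _ ≤ (((2 * (N:ℝ) + 1) ^ d) ^ 2)⁻¹ *
          (3 * (K * ((F.card * β) * (F.card * β)))) := by
        have h1 : W * W ≤ (F.card * β) * (F.card * β) :=
          mul_le_mul hW_le hW_le hW0 (by positivity)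
        have h2 : K * (W * W) ≤ K * ((F.card * β) * (F.card * β)) :=
          mul_le_mul_of_nonneg_left h1 hK0
        have h3 : (0:ℝ) ≤ (((2 * (N:ℝ) + 1) ^ d) ^ 2)⁻¹ := by positivity
        refine mul_le_mul_of_nonneg_left ?_ h3
        linarith
    _ = 48 * max 𝒞 0 * β ^ 2 * ((F.card : ℝ) / (2 * (N:ℝ) + 1) ^ d) ^ 2 := by
        rw [hK]
        field_simp
        ring
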